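/- Given finitely many n-independent sets X₁,…,X_m ⊆ ℝ², each of cardinality less than N = (n+1)(n+2)/2, a point A ∈ ℝ², and ε > 0, there exists a point A' with dist(A, A') < ε such that for every i the set X_i ∪ {A'} is n-independent. -/

import Mathlib

open MvPolynomial
open scoped Classical

/-- Evaluation of a bivariate polynomial at a point of the plane. -/
noncomputable def evalPt (p : MvPolynomial (Fin 2) ℝ) (A : ℝ × ℝ) : ℝ :=
  MvPolynomial.eval ![A.1, A.2] p

/-- `p` is an `n`-fundamental polynomial of the node `A` with respect to the node set `X`. -/
def IsFund (n : ℕ) (X : Finset (ℝ × ℝ)) (A : ℝ × ℝ)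
    (p : MvPolynomial (Fin 2) ℝ) : Prop :=
  p.totalDegree ≤ n ∧ evalPt p A = 1 ∧ ∀ B ∈ X, B ≠ A → evalPt p B = 0

/-- The node set `X` is `n`-independent. -/
def Indep (n : ℕ) (X : Finset (ℝ × ℝ)) : Prop :=
  ∀ A ∈ X, ∃ p, IsFund n X A p

/-- `d(n,k) = N_n - N_{n-k} = k(2n+3-k)/2`. -/
def dd (n k : ℕ) : ℕ := k * (2 * n + 3 - k) / 2

/-- The node set `X` is `n`-poised. -/
def Poised (n : ℕ) (X : Finset (ℝ × ℝ)) : Prop :=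
  X.card = (n + 1) * (n + 2) / 2 ∧
  ∀ p : MvPolynomial (Fin 2) ℝ, p.totalDegree ≤ n →
    (∀ A ∈ X, evalPt p A = 0) → p = 0

/-- The space of polynomials of total degree at most `n` vanishing on `X`. -/
noncomputable def vanishSp (n : ℕ) (X : Finset (ℝ × ℝ)) :
    Submodule ℝ (MvPolynomial (Fin 2) ℝ) :=
  MvPolynomial.restrictTotalDegree (Fin 2) ℝ n ⊓
    ⨅ A ∈ X, LinearMap.ker ((MvPolynomial.aeval (R := ℝ) ![A.1, A.2]).toLinearMap)

lemma evalPt_sub (p q : MvPolynomial (Fin 2) ℝ) (B : ℝ × ℝ) :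
    evalPt (p - q) B = evalPt p B - evalPt q B := by simp [evalPt]

lemma evalPt_smul (c : ℝ) (p : MvPolynomial (Fin 2) ℝ) (B : ℝ × ℝ) :
    evalPt (c • p) B = c * evalPt p B := by simp [evalPt, smul_eval]

noncomputable def evL (X : Finset (ℝ × ℝ)) : MvPolynomial (Fin 2) ℝ →ₗ[ℝ] (↥X → ℝ) :=
  LinearMap.pi fun B => (MvPolynomial.aeval (R := ℝ) ![B.1.1, B.1.2]).toLinearMap

lemma evL_apply (X : Finset (ℝ × ℝ)) (p : MvPolynomial (Fin 2) ℝ) (B : ↥X) :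
    evL X p B = evalPt p B.1 := by
  rfl

def tset (n : ℕ) : Finset (ℕ × ℕ) :=
  (Finset.range (n+1)).biUnion fun k => Finset.HasAntidiagonal.antidiagonal k

lemma mem_tset {n : ℕ} {q : ℕ × ℕ} : q ∈ tset n ↔ q.1 + q.2 ≤ n := by
  simp only [tset, Finset.mem_biUnion, Finset.mem_range, Finset.HasAntidiagonal.mem_antidiagonal]
  constructor
  · rintro ⟨k, hk, rfl⟩; omega
  · intro h; exact ⟨q.1 + q.2, by omega, rfl⟩

lemma card_tset (n : ℕ) : (tset n).card = (n+1)*(n+2)/2 := by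
  rw [tset, Finset.card_biUnion]
  · have h1 : ∀ k ∈ Finset.range (n+1), (Finset.HasAntidiagonal.antidiagonal k).card = k + 1 :=
      fun k _ => Finset.Nat.card_antidiagonal k
    rw [Finset.sum_congr rfl h1, Finset.sum_add_distrib, Finset.sum_const, Finset.card_range]
    have hS : (∑ i ∈ Finset.range (n+1), i) * 2 = (n+1)*n := by
      simpa using Finset.sum_range_id_mul_two (n+1)
    set S := ∑ i ∈ Finset.range (n+1), i with hSdef
    have h2 : (n+1)*(n+2) = (n+1)*n + 2*(n+1) := by ring
    set a := (n+1)*n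
    set b := (n+1)*(n+2)
    simp only [smul_eq_mul, mul_one]
    omega
  · intro k _ l _ hkl
    simp only [Finset.disjoint_left, Finset.HasAntidiagonal.mem_antidiagonal]
    intro q h1 h2; omega

noncomputable def monF (q : ℕ × ℕ) : MvPolynomial (Fin 2) ℝ :=
  MvPolynomial.monomial (Finsupp.single 0 q.1 + Finsupp.single 1 q.2) 1

lemma monF_totalDegree (q : ℕ × ℕ) : (monF q).totalDegree = q.1 + q.2 := by
  rw [monF, totalDegree_monomial _ one_ne_zero]
  rw [Finsupp.sum_add_index (by simp) (by simp)]
  simp [Finsupp.sum_single_index]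

lemma monF_inj : Function.Injective
    (fun q : ℕ × ℕ => Finsupp.single (0 : Fin 2) q.1 + Finsupp.single 1 q.2) := by
  intro a b h
  have h0 := DFunLike.congr_fun h 0
  have h1 := DFunLike.congr_fun h 1
  simp [Finsupp.single_apply] at h0 h1
  exact Prod.ext h0 h1

lemma monF_linIndep : LinearIndependent ℝ monF := by
  have hb := (MvPolynomial.basisMonomials (Fin 2) ℝ).linearIndependent
  rw [MvPolynomial.coe_basisMonomials] at hb
  exact hb.comp _ monF_inj

lemma exists_vanish (n : ℕ) (X : Finset (ℝ × ℝ)) (h : X.card < (n+1)*(n+2)/2) :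
    ∃ p : MvPolynomial (Fin 2) ℝ, p ≠ 0 ∧ p.totalDegree ≤ n ∧ ∀ B ∈ X, evalPt p B = 0 := by
  by_contra hcon
  push_neg at hcon
  have hker : ∀ p : MvPolynomial (Fin 2) ℝ, p.totalDegree ≤ n →
      (∀ B ∈ X, evalPt p B = 0) → p = 0 := by
    intro p hd hv
    by_contra hp
    obtain ⟨B, hB, hBv⟩ := hcon p hp hd
    exact hBv (hv B hB)
  have hli : LinearIndependent ℝ ((evL X) ∘ (fun q : ↥(tset n) => monF q.1)) := by
    apply LinearIndependent.map (monF_linIndep.comp _ Subtype.val_injective)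
    rw [Submodule.disjoint_def]
    intro p hsp hk
    apply hker
    · have hle : Submodule.span ℝ (Set.range fun q : ↥(tset n) => monF q.1) ≤
          restrictTotalDegree (Fin 2) ℝ n := by
        rw [Submodule.span_le]
        rintro _ ⟨q, rfl⟩
        rw [SetLike.mem_coe, mem_restrictTotalDegree, monF_totalDegree]
        exact mem_tset.mp q.2
      exact (mem_restrictTotalDegree _ _ _).mp (hle hsp)
    · intro B hB
      have h2 := congrFun (LinearMap.mem_ker.mp hk) ⟨B, hB⟩
      rwa [evL_apply] at h2
  have hcard2 := hli.fintype_card_le_finrank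
  rw [Module.finrank_fintype_fun_eq_card, Fintype.card_coe, Fintype.card_coe, card_tset] at hcard2
  omega

lemma indep_insert (n : ℕ) (X : Finset (ℝ × ℝ)) (hX : Indep n X)
    (p : MvPolynomial (Fin 2) ℝ) (hd : p.totalDegree ≤ n)
    (hv : ∀ B ∈ X, evalPt p B = 0) (A' : ℝ × ℝ) (hA : evalPt p A' ≠ 0) :
    Indep n (insert A' X) := by
  intro B hB
  by_cases hBA : B = A'
  · subst hBA
    refine ⟨(evalPt p B)⁻¹ • p, (totalDegree_smul_le _ _).trans hd, ?_, ?_⟩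
    · rw [evalPt_smul, inv_mul_cancel₀ hA]
    · intro C hC hCB
      rcases Finset.mem_insert.mp hC with rfl | hC
      · exact absurd rfl hCB
      · rw [evalPt_smul, hv C hC, mul_zero]
  · have hBX : B ∈ X := by
      rcases Finset.mem_insert.mp hB with rfl | h
      · exact absurd rfl hBA
      · exact h
    obtain ⟨f, hfd, hf1, hf0⟩ := hX B hBX
    refine ⟨f - (evalPt f A' / evalPt p A') • p, ?_, ?_, ?_⟩
    · exact le_trans (totalDegree_sub _ _)
        (max_le hfd ((totalDegree_smul_le _ _).trans hd))
    · rw [evalPt_sub, evalPt_smul, hf1, hv B hBX, mul_zero, sub_zero]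
    · intro C hC hCB
      rcases Finset.mem_insert.mp hC with rfl | hC
      · rw [evalPt_sub, evalPt_smul, div_mul_cancel₀ _ hA, sub_self]
      · by_cases hCA : C = A'
        · subst hCA
          rw [evalPt_sub, evalPt_smul, div_mul_cancel₀ _ hA, sub_self]
        · rw [evalPt_sub, evalPt_smul, hf0 C hC hCB, hv C hC, mul_zero, sub_zero]

theorem stmt3 (n m : ℕ) (X : Fin m → Finset (ℝ × ℝ))
    (hX : ∀ i, Indep n (X i))
    (hcard : ∀ i, (X i).card < (n + 1) * (n + 2) / 2)
    (A : ℝ × ℝ) (ε : ℝ) (hε : 0 < ε) :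
    ∃ A' : ℝ × ℝ, dist A A' < ε ∧ ∀ i, Indep n (insert A' (X i)) := by
  choose p hp0 hpd hpv using fun i => exists_vanish n (X i) (hcard i)
  set q : MvPolynomial (Fin 2) ℝ := ∏ i, p i with hq
  have hq0 : q ≠ 0 := Finset.prod_ne_zero_iff.mpr fun i _ => hp0 i
  have hex : ∃ a : Fin 2 → ℝ, MvPolynomial.eval a q ≠ 0 := by
    by_contra hcon
    push_neg at hcon
    exact hq0 (MvPolynomial.funext fun x => by rw [hcon x, map_zero])
  obtain ⟨a, ha⟩ := hex
  set v1 : ℝ := a 0 - A.1 with hv1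
  set v2 : ℝ := a 1 - A.2 with hv2
  set g : Fin 2 → Polynomial ℝ := ![Polynomial.C A.1 + Polynomial.X * Polynomial.C v1,
    Polynomial.C A.2 + Polynomial.X * Polynomial.C v2] with hg
  set r : Polynomial ℝ := MvPolynomial.eval₂ Polynomial.C g q with hr
  have hkey : ∀ t : ℝ, Polynomial.eval t r = MvPolynomial.eval ![A.1 + t*v1, A.2 + t*v2] q := by
    intro t
    have hcl := MvPolynomial.eval₂_comp_left (Polynomial.evalRingHom t) Polynomial.C g q
    simp only [Polynomial.coe_evalRingHom] at hcl
    rw [hr, hcl]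
    have hC : (Polynomial.evalRingHom t).comp Polynomial.C = RingHom.id ℝ := by
      ext x; simp
    rw [hC]
    have harg : (Polynomial.eval t) ∘ g = ![A.1 + t*v1, A.2 + t*v2] := by
      funext i
      fin_cases i <;> simp [hg] <;> ring
    rw [harg]
    rfl
  have hr0 : r ≠ 0 := by
    intro h
    apply ha
    have h1 := hkey 1
    rw [h, Polynomial.eval_zero] at h1
    have harg : ![A.1 + 1*v1, A.2 + 1*v2] = a := by
      funext i
      fin_cases i <;> simp [hv1, hv2] <;> ring
    rw [harg] at h1
    exact h1.symm
  have hden : (0:ℝ) < 1 + |v1| + |v2| := by positivity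
  set δ : ℝ := ε / (1 + |v1| + |v2|) with hδdef
  have hδ : 0 < δ := div_pos hε hden
  have hne : ((Set.Ioo (0:ℝ) δ) \ {x | r.IsRoot x}).Nonempty :=
    ((Set.Ioo_infinite hδ).diff (Polynomial.finite_setOf_isRoot hr0)).nonempty
  obtain ⟨t, ⟨ht0, htδ⟩, htr⟩ := hne
  refine ⟨(A.1 + t*v1, A.2 + t*v2), ?_, ?_⟩
  · rw [Prod.dist_eq]
    have hδε : δ * (1 + |v1| + |v2|) = ε := div_mul_cancel₀ ε hden.ne'
    have bound : ∀ w : ℝ, |w| ≤ 1 + |v1| + |v2| → t * |w| < ε := by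
      intro w hw
      calc t * |w| ≤ t * (1 + |v1| + |v2|) := mul_le_mul_of_nonneg_left hw ht0.le
        _ < δ * (1 + |v1| + |v2|) := mul_lt_mul_of_pos_right htδ hden
        _ = ε := hδε
    apply max_lt
    · rw [Real.dist_eq, show A.1 - (A.1 + t*v1) = -(t*v1) by ring, abs_neg, abs_mul,
        abs_of_pos ht0]
      exact bound v1 (by linarith [abs_nonneg v2])
    · rw [Real.dist_eq, show A.2 - (A.2 + t*v2) = -(t*v2) by ring, abs_neg, abs_mul,
        abs_of_pos ht0]
      exact bound v2 (by linarith [abs_nonneg v1])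
  · intro i
    apply indep_insert n (X i) (hX i) (p i) (hpd i) (hpv i)
    have hqA : evalPt q (A.1 + t*v1, A.2 + t*v2) ≠ 0 := by
      rw [evalPt]
      rw [show (![(A.1 + t*v1, A.2 + t*v2).1, (A.1 + t*v1, A.2 + t*v2).2] : Fin 2 → ℝ)
        = ![A.1 + t*v1, A.2 + t*v2] from rfl, ← hkey t]
      exact htr
    rw [hq] at hqA
    have hprod : evalPt (∏ j, p j) (A.1 + t*v1, A.2 + t*v2)
        = ∏ j, evalPt (p j) (A.1 + t*v1, A.2 + t*v2) := by
      simp [evalPt]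
    rw [hprod] at hqA
    exact Finset.prod_ne_zero_iff.mp hqA i (Finset.mem_univ i)
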